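/- arXiv:1611.05728 — 4 statements merged into one kernel-verified Lean document; each statement's English description precedes it below -/
import Mathlib

section
/- Let h(x) := (1 + x/2)e^{-x} - 1 + x/2. Then for all x ≥ 0, h(x) ≤ x³/12. -/
open Real

theorem stmt3 (x : ℝ) (hx : 0 ≤ x) :
    (1 + x / 2) * exp (-x) - 1 + x / 2 ≤ x ^ 3 / 12 := by
  have hsum : 1 + x + x ^ 2 / 2 + x ^ 3 / 6 ≤ exp x := by
    have h := Real.sum_le_exp_of_nonneg hx 4
    simp [Finset.sum_range_succ, Nat.factorial] at h
    nlinarith [h]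
  have hp : (0:ℝ) < 1 - x / 2 + x ^ 3 / 12 := by
    nlinarith [sq_nonneg (x - 1), sq_nonneg (x ^ 2 - 2), sq_nonneg x, sq_nonneg (x - 2)]
  have hE := Real.exp_pos x
  have key : 1 + x / 2 ≤ (1 - x / 2 + x ^ 3 / 12) * exp x := by
    nlinarith [mul_nonneg hp.le (sub_nonneg.2 hsum), pow_nonneg hx 5, pow_nonneg hx 6]
  rw [Real.exp_neg]
  have hinv : (exp x)⁻¹ * exp x = 1 := inv_mul_cancel₀ hE.ne'
  nlinarith [mul_le_mul_of_nonneg_left key (inv_nonneg.2 hE.le), hinv, inv_nonneg.2 hE.le]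
end

section
/- For every A > 0, the equation a - a²/2 = A·(e^{-a} - 1 + a) has a unique solution a = a(A) in the open interval (0, 2). -/
open Real Set

noncomputable def phiF (a : ℝ) : ℝ := exp (-a) - 1 + a
noncomputable def pF (a : ℝ) : ℝ := a - a ^ 2 / 2
noncomputable def psiF (a : ℝ) : ℝ := pF a / phiF a
noncomputable def NF (a : ℝ) : ℝ := exp (-a) * (1 - a ^ 2 / 2) - (1 - a + a ^ 2 / 2)
noncomputable def N1F (a : ℝ) : ℝ := -exp (-a) * (1 + a - a ^ 2 / 2) + (1 - a)

lemma phi_pos {a : ℝ} (ha : 0 < a) : 0 < phiF a := by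
  have h := add_one_lt_exp (x := -a) (by linarith)
  unfold phiF; linarith

lemma hasDerivAt_phi (a : ℝ) : HasDerivAt phiF (1 - exp (-a)) a := by
  have h1 : HasDerivAt (fun a : ℝ => exp (-a)) (-exp (-a)) a := by
    simpa using (hasDerivAt_neg a).exp
  have : HasDerivAt phiF (-exp (-a) - 0 + 1) a := ((h1.sub (hasDerivAt_const a 1)).add (hasDerivAt_id a))
  convert this using 1; ring

lemma hasDerivAt_p (a : ℝ) : HasDerivAt pF (1 - a) a := by
  have : HasDerivAt pF (1 - 2 * a ^ 1 / 2) a := (hasDerivAt_id a).sub ((hasDerivAt_pow 2 a).div_const 2)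
  convert this using 1; ring

lemma hasDerivAt_N1 (a : ℝ) : HasDerivAt N1F (exp (-a) * (2 * a - a ^ 2 / 2) - 1) a := by
  have h1 : HasDerivAt (fun a : ℝ => exp (-a)) (-exp (-a)) a := by
    simpa using (hasDerivAt_neg a).exp
  have h2 : HasDerivAt (fun a : ℝ => 1 + a - a ^ 2 / 2) (0 + 1 - 2 * a ^ 1 / 2) a :=
    ((hasDerivAt_const a 1).add (hasDerivAt_id a)).sub ((hasDerivAt_pow 2 a).div_const 2)
  have h3 : HasDerivAt (fun a : ℝ => 1 - a) (0 - 1) a := (hasDerivAt_const a 1).sub (hasDerivAt_id a)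
  have := ((h1.neg.mul h2).add h3)
  exact this.congr_deriv (by simp; ring)

lemma hasDerivAt_N (a : ℝ) : HasDerivAt NF (N1F a) a := by
  have h1 : HasDerivAt (fun a : ℝ => exp (-a)) (-exp (-a)) a := by
    simpa using (hasDerivAt_neg a).exp
  have h2 : HasDerivAt (fun a : ℝ => 1 - a ^ 2 / 2) (0 - 2 * a ^ 1 / 2) a :=
    (hasDerivAt_const a 1).sub ((hasDerivAt_pow 2 a).div_const 2)
  have h3 : HasDerivAt (fun a : ℝ => 1 - a + a ^ 2 / 2) (0 - 1 + 2 * a ^ 1 / 2) a :=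
    ((hasDerivAt_const a 1).sub (hasDerivAt_id a)).add ((hasDerivAt_pow 2 a).div_const 2)
  have := (h1.mul h2).sub h3
  exact this.congr_deriv (by unfold N1F; ring)

lemma N1_neg {a : ℝ} (ha : a ∈ Ioc (0:ℝ) 2) : N1F a < 0 := by
  have hanti : StrictAntiOn N1F (Icc 0 2) := by
    apply strictAntiOn_of_deriv_neg (convex_Icc 0 2)
      (fun x _ => (hasDerivAt_N1 x).continuousAt.continuousWithinAt)
    intro x hx
    rw [interior_Icc] at hx
    rw [(hasDerivAt_N1 x).deriv]
    have hx0 : (0:ℝ) < x := hx.1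
    have h1 : 1 + x < exp x := by linarith [add_one_lt_exp (x := x) (by linarith)]
    have he : exp (-x) * (1 + x) < 1 := by
      have := mul_lt_mul_of_pos_left h1 (exp_pos (-x))
      rwa [← Real.exp_add, neg_add_cancel, Real.exp_zero] at this
    have hX : 2 * x - x ^ 2 / 2 ≤ 1 + x := by nlinarith [sq_nonneg (x - 1)]
    have hXnn : 0 ≤ 2 * x - x ^ 2 / 2 := by nlinarith [hx.2]
    nlinarith [exp_pos (-x), mul_le_mul_of_nonneg_left hX (exp_pos (-x)).le]
  have h0 : N1F 0 = 0 := by unfold N1F; simp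
  have := hanti (by constructor <;> norm_num) ⟨ha.1.le, ha.2⟩ ha.1
  linarith

lemma N_neg {a : ℝ} (ha : a ∈ Ioc (0:ℝ) 2) : NF a < 0 := by
  have hanti : StrictAntiOn NF (Icc 0 2) := by
    apply strictAntiOn_of_deriv_neg (convex_Icc 0 2)
      (fun x _ => (hasDerivAt_N x).continuousAt.continuousWithinAt)
    intro x hx
    rw [interior_Icc] at hx
    rw [(hasDerivAt_N x).deriv]
    exact N1_neg ⟨hx.1, hx.2.le⟩
  have h0 : NF 0 = 0 := by unfold NF; simp
  have := hanti (by constructor <;> norm_num) ⟨ha.1.le, ha.2⟩ ha.1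
  linarith

lemma hasDerivAt_psi {a : ℝ} (ha : 0 < a) : HasDerivAt psiF (NF a / (phiF a) ^ 2) a := by
  have h := (hasDerivAt_p a).div (hasDerivAt_phi a) (phi_pos ha).ne'
  refine h.congr_deriv ?_
  unfold NF pF phiF
  field_simp
  ring

lemma psi_strictAnti : StrictAntiOn psiF (Ioo 0 2) := by
  apply strictAntiOn_of_deriv_neg (convex_Ioo 0 2)
    (fun x hx => (hasDerivAt_psi hx.1).continuousAt.continuousWithinAt)
  intro x hx
  rw [interior_Ioo] at hx
  rw [(hasDerivAt_psi hx.1).deriv]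
  exact div_neg_of_neg_of_pos (N_neg ⟨hx.1, hx.2.le⟩) (pow_pos (phi_pos hx.1) 2)

lemma psi_eq_iff {a A : ℝ} (ha : 0 < a) :
    psiF a = A ↔ a - a ^ 2 / 2 = A * (exp (-a) - 1 + a) := by
  have h := phi_pos ha
  unfold phiF at h
  unfold psiF pF phiF
  rw [div_eq_iff h.ne']

lemma phi_le {a : ℝ} (ha : a ∈ Icc (0:ℝ) 2) : phiF a ≤ a ^ 2 / 2 := by
  have hmono : MonotoneOn (fun a => 1 - a + a ^ 2 / 2 - exp (-a)) (Icc 0 2) := by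
    apply monotoneOn_of_deriv_nonneg (convex_Icc 0 2)
    · apply ContinuousOn.sub
      · fun_prop
      · exact (Real.continuous_exp.comp continuous_neg).continuousOn
    · apply DifferentiableOn.sub
      · fun_prop
      · exact ((Real.differentiable_exp.comp differentiable_neg)).differentiableOn
    · intro x hx
      rw [interior_Icc] at hx
      have h1 : HasDerivAt (fun a : ℝ => exp (-a)) (-exp (-x)) x := by
        simpa using (hasDerivAt_neg x).exp
      have h2 : HasDerivAt (fun a : ℝ => 1 - a + a ^ 2 / 2 - exp (-a))
          (0 - 1 + 2 * x ^ 1 / 2 - (-exp (-x))) x :=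
        (((hasDerivAt_const x 1).sub (hasDerivAt_id x)).add ((hasDerivAt_pow 2 x).div_const 2)).sub h1
      rw [h2.deriv]
      have := phi_pos hx.1
      unfold phiF at this
      simp only [pow_one]
      linarith
  have h0 : (fun a => 1 - a + a ^ 2 / 2 - exp (-a)) 0 = 0 := by simp
  have := hmono (by constructor <;> norm_num) ha ha.1
  simp only [h0] at this
  unfold phiF
  linarith

theorem stmt4 (A : ℝ) (hA : 0 < A) :
    ∃! a : ℝ, a ∈ Set.Ioo (0 : ℝ) 2 ∧ a - a ^ 2 / 2 = A * (exp (-a) - 1 + a) := by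
  -- existence
  set δ : ℝ := min 1 (1 / (A + 1)) with hδdef
  have hδ0 : 0 < δ := lt_min one_pos (by positivity)
  have hδ1 : δ ≤ 1 := min_le_left _ _
  have hδA : δ ≤ 1 / (A + 1) := min_le_right _ _
  have hδ2 : δ ≤ 2 := hδ1.trans (by norm_num)
  have hpsi2 : psiF 2 = 0 := by unfold psiF pF; norm_num
  have hpsiδ : A < psiF δ := by
    have hφpos := phi_pos hδ0
    have hφle : phiF δ ≤ δ ^ 2 / 2 := phi_le ⟨hδ0.le, hδ2⟩
    have hppos : 0 < pF δ := by unfold pF; nlinarith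
    have h1 : pF δ / (δ ^ 2 / 2) ≤ psiF δ := by
      unfold psiF
      apply div_le_div_of_nonneg_left hppos.le hφpos hφle
    have h2 : pF δ / (δ ^ 2 / 2) = (2 - δ) / δ := by
      unfold pF; field_simp
    have h3 : A + 1 ≤ 1 / δ := by
      rw [le_div_iff₀ hδ0]
      calc (A + 1) * δ ≤ (A + 1) * (1/(A+1)) := by
            apply mul_le_mul_of_nonneg_left hδA (by linarith)
        _ = 1 := by field_simp
    have h4 : (1:ℝ) / δ ≤ (2 - δ) / δ := by gcongr; linarith
    calc A < A + 1 := by linarith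
      _ ≤ 1 / δ := h3
      _ ≤ (2 - δ) / δ := h4
      _ = pF δ / (δ ^ 2 / 2) := h2.symm
      _ ≤ psiF δ := h1
  have hcont : ContinuousOn psiF (Icc δ 2) := fun x hx =>
    (hasDerivAt_psi (lt_of_lt_of_le hδ0 hx.1)).continuousAt.continuousWithinAt
  have hsub := intermediate_value_Icc' hδ2 hcont
  have hAmem : A ∈ Icc (psiF 2) (psiF δ) := by
    rw [hpsi2]; exact ⟨hA.le, hpsiδ.le⟩
  obtain ⟨c, hc, hcA⟩ := hsub hAmem
  have hc0 : 0 < c := lt_of_lt_of_le hδ0 hc.1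
  have hc2 : c < 2 := by
    rcases lt_or_eq_of_le hc.2 with h | h
    · exact h
    · exfalso; rw [h, hpsi2] at hcA; linarith
  have hcIoo : c ∈ Ioo (0:ℝ) 2 := ⟨hc0, hc2⟩
  refine ⟨c, ⟨hcIoo, (psi_eq_iff hc0).mp hcA⟩, ?_⟩
  intro y ⟨hyIoo, hyeq⟩
  have hy : psiF y = A := (psi_eq_iff hyIoo.1).mpr hyeq
  exact psi_strictAnti.injOn hyIoo hcIoo (by rw [hy, hcA])
end

section
/- The function a ↦ φ(a)/(a - a²/2), where φ(a) = e^{-a} - 1 + a, is strictly increasing on the interval (0, 2). -/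
open Real

theorem stmt5 :
    StrictMonoOn (fun a : ℝ => (exp (-a) - 1 + a) / (a - a ^ 2 / 2)) (Set.Ioo (0 : ℝ) 2) := by
  have hden : ∀ a ∈ Set.Ioo (0:ℝ) 2, 0 < a - a ^ 2 / 2 := by
    rintro a ⟨h0, h2⟩; nlinarith
  have hd : ∀ a ∈ Set.Ioo (0:ℝ) 2,
      HasDerivAt (fun a : ℝ => (exp (-a) - 1 + a) / (a - a ^ 2 / 2))
      (((1 - exp (-a)) * (a - a ^ 2 / 2) - (exp (-a) - 1 + a) * (1 - a)) /
        (a - a ^ 2 / 2) ^ 2) a := by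
    intro a ha
    have h1 : HasDerivAt (fun a : ℝ => exp (-a) - 1 + a) (1 - exp (-a)) a := by
      have hne : HasDerivAt (fun a : ℝ => exp (-a)) (-exp (-a)) a := by
        exact ((Real.hasDerivAt_exp (-a)).comp a (hasDerivAt_neg a)).congr_deriv (by ring)
      exact ((hne.sub_const 1).add (hasDerivAt_id a)).congr_deriv (by ring)
    have h2 : HasDerivAt (fun a : ℝ => a - a ^ 2 / 2) (1 - a) a := by
      have := (hasDerivAt_id a).sub ((hasDerivAt_pow 2 a).div_const 2)
      exact this.congr_deriv (by rw [show (2:ℕ) - 1 = 1 from rfl]; push_cast; ring)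
    exact h1.div h2 (ne_of_gt (hden a ha))
  apply strictMonoOn_of_deriv_pos (convex_Ioo 0 2)
  · apply ContinuousOn.div
    · fun_prop
    · fun_prop
    · intro a ha; exact (hden a ha).ne'
  · intro a ha
    rw [interior_Ioo] at ha
    rw [(hd a ha).deriv]
    obtain ⟨h0, h2⟩ := ha
    have hEpos : (0:ℝ) < exp a := exp_pos a
    have hE : 1 + a + a ^ 2 / 2 + a ^ 3 / 6 + a ^ 4 / 24 ≤ exp a := by
      have := Real.sum_le_exp_of_nonneg h0.le 5
      simp [Finset.sum_range_succ, Nat.factorial] at this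
      linarith
    have hq : (0:ℝ) < 1 - a + a ^ 2 / 2 := by nlinarith
    have key : 1 - a ^ 2 / 2 < exp a * (1 - a + a ^ 2 / 2) := by
      nlinarith [mul_le_mul_of_nonneg_right hE hq.le, pow_pos h0 2, pow_pos h0 3, pow_pos h0 4, pow_pos h0 5, pow_pos h0 6]
    have hinv : exp a * (exp a)⁻¹ = 1 := mul_inv_cancel₀ hEpos.ne'
    rw [Real.exp_neg]
    apply div_pos
    · nlinarith [mul_lt_mul_of_pos_left key (inv_pos.mpr hEpos)]
    · exact pow_pos (hden a ⟨h0, h2⟩) 2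
end

section
/- Let X be a nonnegative random variable and let β ∈ (1,2). Suppose P(X > x) ≤ C·x^{-β} for all x > 0, for some constant C > 0. Then for every r > 0, E[min(X, r·X²)] ≤ (2/(2-β) + 1/(β-1))·C·r^{β-1}. -/
open MeasureTheory ProbabilityTheory

theorem stmt8 {Ω : Type*} [MeasureSpace Ω] [IsProbabilityMeasure (ℙ : Measure Ω)]
    (X : Ω → ℝ) (hXm : Measurable X) (hX0 : ∀ ω, 0 ≤ X ω)
    (β C : ℝ) (hβ : β ∈ Set.Ioo (1 : ℝ) 2) (hC : 0 < C)
    (htail : ∀ x : ℝ, 0 < x → (ℙ {ω | x < X ω}).toReal ≤ C * x ^ (-β))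
    (r : ℝ) (hr : 0 < r) :
    ∫ ω, min (X ω) (r * X ω ^ 2) ≤ (2 / (2 - β) + 1 / (β - 1)) * C * r ^ (β - 1) := by
  obtain ⟨hβ1, hβ2⟩ := hβ
  have h2β : 0 < 2 - β := by linarith
  have hβ1' : 0 < β - 1 := by linarith
  have hrinv : 0 < 1 / r := by positivity
  have hrpow : 0 < r ^ (β - 1) := Real.rpow_pos_of_pos hr _
  have hbpos : 0 ≤ (2 / (2 - β) + 1 / (β - 1)) * C * r ^ (β - 1) := by positivity
  have fnn : ∀ ω, 0 ≤ min (X ω) (r * X ω ^ 2) := fun ω =>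
    le_min (hX0 ω) (by positivity)
  have fmeas : Measurable fun ω => min (X ω) (r * X ω ^ 2) :=
    hXm.min (measurable_const.mul (hXm.pow_const 2))
  -- pointwise tail bounds
  have tail1 : ∀ t : ℝ, t ∈ Set.Ioc (0:ℝ) (1 / r) →
      ℙ {ω | t < min (X ω) (r * X ω ^ 2)} ≤
        ENNReal.ofReal (C * r ^ (β / 2) * t ^ (-(β / 2))) := by
    intro t ht
    have ht0 : 0 < t := ht.1
    have hs : 0 < Real.sqrt (t / r) := Real.sqrt_pos.mpr (by positivity)
    have hsub : {ω | t < min (X ω) (r * X ω ^ 2)} ⊆ {ω | Real.sqrt (t / r) < X ω} := by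
      intro ω hω
      have h2 : t < r * X ω ^ 2 := lt_of_lt_of_le hω (min_le_right _ _)
      have h3 : t / r < X ω ^ 2 := by
        rw [div_lt_iff₀ hr]; linarith [h2]
      have := Real.sqrt_lt_sqrt (by positivity) h3
      rwa [Real.sqrt_sq (hX0 ω)] at this
    have h4 := (measure_mono hsub).trans_eq
      (ENNReal.ofReal_toReal (measure_ne_top ℙ _)).symm
    refine h4.trans (ENNReal.ofReal_le_ofReal ?_)
    refine (htail _ hs).trans_eq ?_
    rw [Real.sqrt_eq_rpow, ← Real.rpow_mul (by positivity),
      Real.div_rpow ht0.le hr.le]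
    rw [show (1:ℝ)/2 * -β = -(β/2) by ring, Real.rpow_neg hr.le (β/2),
      div_eq_mul_inv, inv_inv]
    ring
  have tail2 : ∀ t : ℝ, t ∈ Set.Ioi (1 / r) →
      ℙ {ω | t < min (X ω) (r * X ω ^ 2)} ≤ ENNReal.ofReal (C * t ^ (-β)) := by
    intro t ht
    have ht0 : 0 < t := hrinv.trans ht
    have hsub : {ω | t < min (X ω) (r * X ω ^ 2)} ⊆ {ω | t < X ω} := by
      intro ω hω
      have hω' : t < min (X ω) (r * X ω ^ 2) := hω
      exact lt_of_lt_of_le hω' (min_le_left _ _)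
    have h4 := (measure_mono hsub).trans_eq
      (ENNReal.ofReal_toReal (measure_ne_top ℙ _)).symm
    exact h4.trans (ENNReal.ofReal_le_ofReal (htail _ ht0))
  -- the two real integrals
  have hint1 : IntegrableOn (fun t : ℝ => C * r ^ (β / 2) * t ^ (-(β / 2)))
      (Set.Ioc 0 (1 / r)) := by
    have h := intervalIntegral.intervalIntegrable_rpow' (a := 0) (b := 1/r)
      (r := -(β/2)) (by linarith)
    rw [intervalIntegrable_iff_integrableOn_Ioc_of_le hrinv.le] at h
    exact h.const_mul _
  have hint2 : IntegrableOn (fun t : ℝ => C * t ^ (-β)) (Set.Ioi (1 / r)) :=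
    (integrableOn_Ioi_rpow_of_lt (by linarith) hrinv).const_mul C
  have hI1 : ∫ t in Set.Ioc (0:ℝ) (1 / r), C * r ^ (β / 2) * t ^ (-(β / 2)) =
      2 / (2 - β) * C * r ^ (β - 1) := by
    rw [← intervalIntegral.integral_of_le hrinv.le, intervalIntegral.integral_const_mul,
      integral_rpow (Or.inl (by linarith))]
    rw [Real.zero_rpow (by linarith), sub_zero, one_div, Real.inv_rpow hr.le,
      ← Real.rpow_neg hr.le]
    have hkey : r ^ (β / 2) * r ^ (-(-(β / 2) + 1)) = r ^ (β - 1) := by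
      rw [← Real.rpow_add hr]; congr 1; ring
    rw [div_eq_mul_inv (r ^ (-(-(β / 2) + 1))), mul_assoc C, ← mul_assoc (r ^ (β / 2)), hkey]
    rw [show (-(β / 2) + 1)⁻¹ = 2 / (2 - β) by
      rw [inv_eq_one_div, div_eq_div_iff (by linarith) (by linarith)]; ring]
    ring
  have hI2 : ∫ t in Set.Ioi (1 / r), C * t ^ (-β) = 1 / (β - 1) * C * r ^ (β - 1) := by
    rw [MeasureTheory.integral_const_mul, integral_Ioi_rpow_of_lt (by linarith) hrinv]
    rw [one_div, Real.inv_rpow hr.le, ← Real.rpow_neg hr.le]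
    rw [show -(-β+1) = β - 1 by ring]
    have hne : β - 1 ≠ 0 := by linarith
    have hne2 : -β + 1 ≠ 0 := by intro h; apply hne; linarith
    field_simp
    ring
  have hI1nn : 0 ≤ ∫ t in Set.Ioc (0:ℝ) (1 / r), C * r ^ (β / 2) * t ^ (-(β / 2)) := by
    rw [hI1]; positivity
  -- key lintegral bound
  have key : ∫⁻ ω, ENNReal.ofReal (min (X ω) (r * X ω ^ 2)) ≤
      ENNReal.ofReal ((2 / (2 - β) + 1 / (β - 1)) * C * r ^ (β - 1)) := by
    rw [lintegral_eq_lintegral_meas_lt ℙ (Filter.Eventually.of_forall fnn) fmeas.aemeasurable]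
    have hsplit : Set.Ioi (0:ℝ) = Set.Ioc 0 (1 / r) ∪ Set.Ioi (1 / r) :=
      (Set.Ioc_union_Ioi_eq_Ioi hrinv.le).symm
    rw [hsplit, lintegral_union measurableSet_Ioi (Set.Ioc_disjoint_Ioi le_rfl)]
    have b1 : ∫⁻ t in Set.Ioc (0:ℝ) (1 / r), ℙ {ω | t < min (X ω) (r * X ω ^ 2)} ≤
        ENNReal.ofReal (∫ t in Set.Ioc (0:ℝ) (1 / r), C * r ^ (β / 2) * t ^ (-(β / 2))) := by
      rw [ofReal_integral_eq_lintegral_ofReal hint1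
        ((ae_restrict_iff' measurableSet_Ioc).mpr (Filter.Eventually.of_forall
          (fun t ht => by have h0 : (0:ℝ) < t := ht.1; positivity)))]
      exact setLIntegral_mono (by fun_prop) tail1
    have b2 : ∫⁻ t in Set.Ioi (1 / r), ℙ {ω | t < min (X ω) (r * X ω ^ 2)} ≤
        ENNReal.ofReal (∫ t in Set.Ioi (1 / r), C * t ^ (-β)) := by
      rw [ofReal_integral_eq_lintegral_ofReal hint2
        ((ae_restrict_iff' measurableSet_Ioi).mpr (Filter.Eventually.of_forall
          (fun t ht => by
            have : (0:ℝ) < t := hrinv.trans ht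
            positivity)))]
      exact setLIntegral_mono (by fun_prop) tail2
    refine (add_le_add b1 b2).trans ?_
    rw [← ENNReal.ofReal_add hI1nn (by rw [hI2]; positivity), hI1, hI2]
    apply le_of_eq; congr 1; ring
  -- conclude
  rw [integral_eq_lintegral_of_nonneg_ae (Filter.Eventually.of_forall fnn)
    fmeas.aestronglyMeasurable]
  exact ENNReal.toReal_le_of_le_ofReal hbpos key
end
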